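/- Fix an integer m ≥ 3 and reals c > 0, λ > 0. For every integer n ≥ 5, the coefficient of x² in the polynomial γ_n equals (c⁴ · λ^{n−5} · (n−4) / (m² · (m+2))) · ( ((n+1)/2)·m + (n−5) ). -/

import Mathlib

open Polynomial

/-- The polynomials `θ_n` in one variable `x` (representing `‖α‖²`):
`θ_1 = 1`, `θ_n = 0` for even `n`, and
`θ_{2k+1} = (-1)^k ((1/2)_k / (m/2)_k) c^{2k} x^k` for `k ≥ 1`. -/
noncomputable def thetaPoly (m : ℕ) (c : ℝ) : ℕ → Polynomial ℝ := fun n =>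
  if n % 2 = 1 then
    C ((-1 : ℝ) ^ (n / 2) *
        ((ascPochhammer ℝ (n / 2)).eval ((1 : ℝ) / 2) /
          (ascPochhammer ℝ (n / 2)).eval ((m : ℝ) / 2)) * c ^ (2 * (n / 2))) *
      X ^ (n / 2)
  else 0


lemma coeff1_mul (p q : Polynomial ℝ) :
    (p * q).coeff 1 = p.coeff 0 * q.coeff 1 + p.coeff 1 * q.coeff 0 := by
  rw [Polynomial.coeff_mul, Finset.Nat.sum_antidiagonal_eq_sum_range_succ_mk]
  simp [Finset.sum_range_succ]

lemma coeff2_mul (p q : Polynomial ℝ) :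
    (p * q).coeff 2 = p.coeff 0 * q.coeff 2 + p.coeff 1 * q.coeff 1 + p.coeff 2 * q.coeff 0 := by
  rw [Polynomial.coeff_mul, Finset.Nat.sum_antidiagonal_eq_sum_range_succ_mk]
  simp [Finset.sum_range_succ]

lemma theta_coeff0 (m : ℕ) (c : ℝ) (k : ℕ) :
    (thetaPoly m c k).coeff 0 = if k = 1 then 1 else 0 := by
  unfold thetaPoly
  by_cases h : k % 2 = 1
  · rw [if_pos h, Polynomial.coeff_C_mul, Polynomial.coeff_X_pow]
    by_cases h2 : k = 1
    · subst h2; simp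
    · have h3 : ¬ ((0:ℕ) = k / 2) := by omega
      rw [if_neg h3, if_neg h2, mul_zero]
  · rw [if_neg h, Polynomial.coeff_zero, if_neg (by omega)]

lemma theta_coeff1 (m : ℕ) (hm : 3 ≤ m) (c : ℝ) (k : ℕ) :
    (thetaPoly m c k).coeff 1 = if k = 3 then -(c ^ 2 / m) else 0 := by
  have hm0 : (m : ℝ) ≠ 0 := by positivity
  unfold thetaPoly
  by_cases h : k % 2 = 1
  · rw [if_pos h, Polynomial.coeff_C_mul, Polynomial.coeff_X_pow]
    by_cases h2 : k = 3
    · subst h2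
      norm_num [ascPochhammer_one]
      field_simp
    · have h3 : ¬ ((1:ℕ) = k / 2) := by omega
      rw [if_neg h3, if_neg h2, mul_zero]
  · rw [if_neg h, Polynomial.coeff_zero, if_neg (by omega)]

lemma theta_coeff2 (m : ℕ) (hm : 3 ≤ m) (c : ℝ) (k : ℕ) :
    (thetaPoly m c k).coeff 2 = if k = 5 then 3 * c ^ 4 / ((m : ℝ) * ((m : ℝ) + 2)) else 0 := by
  have hm0 : (m : ℝ) ≠ 0 := by positivity
  have hm2 : (m : ℝ) + 2 ≠ 0 := by positivity
  unfold thetaPoly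
  by_cases h : k % 2 = 1
  · rw [if_pos h, Polynomial.coeff_C_mul, Polynomial.coeff_X_pow]
    by_cases h2 : k = 5
    · subst h2
      norm_num [ascPochhammer_succ_right, ascPochhammer_one]
      field_simp
      ring
    · have h3 : ¬ ((2:ℕ) = k / 2) := by omega
      rw [if_neg h3, if_neg h2, mul_zero]
  · rw [if_neg h, Polynomial.coeff_zero, if_neg (by omega)]

/-- For every `n ≥ 5`, the coefficient of `x²` in `γ_n` equals
`(c⁴ λ^{n-5} (n-4) / (m² (m+2))) ( ((n+1)/2) m + (n-5) )`. -/
theorem coeff_x_two_gamma (m : ℕ) (hm : 3 ≤ m) (c lam : ℝ) (hc : 0 < c) (hlam : 0 < lam)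
    (γ : ℕ → Polynomial ℝ) (hγ1 : γ 1 = 1)
    (hγ : ∀ n, 2 ≤ n → γ n = thetaPoly m c n +
      C lam * ∑ k ∈ Finset.Icc 1 (n - 1), γ (n - k) * thetaPoly m c k) :
    ∀ n, 5 ≤ n →
      (γ n).coeff 2 = c ^ 4 * lam ^ (n - 5) * ((n : ℝ) - 4) / ((m : ℝ) ^ 2 * ((m : ℝ) + 2)) *
        (((n : ℝ) + 1) / 2 * (m : ℝ) + ((n : ℝ) - 5)) := by
  have hm0 : (m : ℝ) ≠ 0 := by positivity
  have hm2 : (m : ℝ) + 2 ≠ 0 := by positivity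
  -- coefficient 0
  have hc0 : ∀ n, 1 ≤ n → (γ n).coeff 0 = lam ^ (n - 1) := by
    intro n hn
    induction n, hn using Nat.le_induction with
    | base => simp [hγ1]
    | succ n hn ih =>
      rw [hγ (n + 1) (by omega)]
      simp only [Polynomial.coeff_add, Polynomial.coeff_C_mul, Polynomial.finset_sum_coeff,
        Polynomial.mul_coeff_zero, theta_coeff0, mul_ite, mul_one, mul_zero,
        Finset.sum_ite_eq', Nat.add_sub_cancel, Polynomial.coeff_C_zero]
      rw [if_neg (by omega : ¬ n + 1 = 1),
        if_pos (by rw [Finset.mem_Icc]; omega : (1:ℕ) ∈ Finset.Icc 1 n), ih, zero_add,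
        ← pow_succ', show n - 1 + 1 = n by omega]
  -- small cases
  have hg1c1 : (γ 1).coeff 1 = 0 := by rw [hγ1]; simp [Polynomial.coeff_one]
  have ht1 : thetaPoly m c 1 = 1 := by simp [thetaPoly]
  have hg2 : γ 2 = C lam := by
    rw [hγ 2 le_rfl, show (2:ℕ) - 1 = 1 from rfl, Finset.Icc_self, Finset.sum_singleton,
      show (2:ℕ) - 1 = 1 from rfl, ht1, hγ1]
    simp [thetaPoly]
  have hg2c1 : (γ 2).coeff 1 = 0 := by rw [hg2]; simp [Polynomial.coeff_C]
  have hg2c2 : (γ 2).coeff 2 = 0 := by rw [hg2]; simp [Polynomial.coeff_C]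
  -- coefficient 1
  have hc1 : ∀ n, 3 ≤ n → (γ n).coeff 1 = -((n : ℝ) - 2) * lam ^ (n - 3) * c ^ 2 / m := by
    intro n hn
    induction n, hn using Nat.le_induction with
    | base =>
      rw [hγ 3 (by omega)]
      simp only [Polynomial.coeff_add, Polynomial.coeff_C_mul, Polynomial.finset_sum_coeff,
        coeff1_mul, theta_coeff0, theta_coeff1 m hm c, mul_ite, mul_one, mul_zero,
        Finset.sum_add_distrib, Finset.sum_ite_eq']
      norm_num [Finset.mem_Icc, hg2c1]
      ring
    | succ n hn ih =>
      rw [hγ (n + 1) (by omega)]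
      simp only [Polynomial.coeff_add, Polynomial.coeff_C_mul, Polynomial.finset_sum_coeff,
        coeff1_mul, theta_coeff0, theta_coeff1 m hm c, mul_ite, mul_one, mul_zero,
        Finset.sum_add_distrib, Finset.sum_ite_eq', Nat.add_sub_cancel]
      rw [if_neg (by omega : ¬ n + 1 = 3),
        if_pos (by rw [Finset.mem_Icc]; omega : (3:ℕ) ∈ Finset.Icc 1 n),
        if_pos (by rw [Finset.mem_Icc]; omega : (1:ℕ) ∈ Finset.Icc 1 n),
        show n + 1 - 3 = n - 2 by omega, ih, hc0 (n - 2) (by omega),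
        show n - 2 - 1 = n - 3 by omega, show n - 2 = (n - 3) + 1 by omega, pow_succ]
      push_cast
      ring
  -- small coefficient-2 cases
  have hg3c2 : (γ 3).coeff 2 = 0 := by
    rw [hγ 3 (by omega)]
    simp only [Polynomial.coeff_add, Polynomial.coeff_C_mul, Polynomial.finset_sum_coeff,
      coeff2_mul, theta_coeff0, theta_coeff1 m hm c, theta_coeff2 m hm c, mul_ite, mul_one,
      mul_zero, Finset.sum_add_distrib, Finset.sum_ite_eq']
    norm_num [Finset.mem_Icc, hg2c2]
  have hg4c2 : (γ 4).coeff 2 = 0 := by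
    rw [hγ 4 (by omega)]
    simp only [Polynomial.coeff_add, Polynomial.coeff_C_mul, Polynomial.finset_sum_coeff,
      coeff2_mul, theta_coeff0, theta_coeff1 m hm c, theta_coeff2 m hm c, mul_ite, mul_one,
      mul_zero, Finset.sum_add_distrib, Finset.sum_ite_eq']
    norm_num [Finset.mem_Icc, hg3c2, hg1c1]
  -- coefficient 2
  intro n hn
  induction n, hn using Nat.le_induction with
  | base =>
    rw [hγ 5 (by omega)]
    simp only [Polynomial.coeff_add, Polynomial.coeff_C_mul, Polynomial.finset_sum_coeff,
      coeff2_mul, theta_coeff0, theta_coeff1 m hm c, theta_coeff2 m hm c, mul_ite, mul_one,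
      mul_zero, Finset.sum_add_distrib, Finset.sum_ite_eq']
    norm_num [Finset.mem_Icc, hg4c2, hg2c1]
    field_simp
  | succ n hn ih =>
    rw [hγ (n + 1) (by omega)]
    simp only [Polynomial.coeff_add, Polynomial.coeff_C_mul, Polynomial.finset_sum_coeff,
      coeff2_mul, theta_coeff0, theta_coeff1 m hm c, theta_coeff2 m hm c, mul_ite, mul_one,
      mul_zero, Finset.sum_add_distrib, Finset.sum_ite_eq', Nat.add_sub_cancel]
    rw [if_neg (by omega : ¬ n + 1 = 5),
      if_pos (by rw [Finset.mem_Icc]; omega : (5:ℕ) ∈ Finset.Icc 1 n),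
      if_pos (by rw [Finset.mem_Icc]; omega : (3:ℕ) ∈ Finset.Icc 1 n),
      if_pos (by rw [Finset.mem_Icc]; omega : (1:ℕ) ∈ Finset.Icc 1 n),
      show n + 1 - 5 = n - 4 by omega, show n + 1 - 3 = n - 2 by omega,
      ih, hc1 (n - 2) (by omega), hc0 (n - 4) (by omega),
      show n - 4 - 1 = n - 5 by omega, show n - 2 - 3 = n - 5 by omega,
      show n - 4 = (n - 5) + 1 by omega, pow_succ,
      Nat.cast_sub (by omega : 2 ≤ n)]
    push_cast
    field_simp
    ring
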